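/- Let x ∈ ℂ with x ≠ 0 and let a₁₁, a₁₂, a₂₁, a₂₂ ∈ ℂ with a₁₁a₂₂ − a₁₂a₂₁ ≠ 0, and let 𝒜 be the 4 × 4 matrix with rows (x,0,0,0), (0,a₁₁,a₁₂,0), (0,a₂₁,a₂₂,0), (0,0,0,1). Then the orthogonal complement of the span of the vectors (1,α) ⊗ 𝒜(1,α,α²,α³) over all α ∈ ℂ is a genuinely entangled subspace of ℂ² ⊗ ℂ² ⊗ ℂ² if and only if a₁₁ ≠ 0, a₁₂ ≠ 0, a₂₁ ≠ 0, a₂₂ ≠ 0, a₁₁a₂₂ − x ≠ 0, and a₁₂a₂₁ − x ≠ 0. -/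

import Mathlib

noncomputable section

abbrev TriH (d₁ d₂ d₃ : ℕ) := EuclideanSpace ℂ (Fin d₁ × Fin d₂ × Fin d₃)

def BiprodA {d₁ d₂ d₃ : ℕ} (ψ : TriH d₁ d₂ d₃) : Prop :=
  ∃ (a : Fin d₁ → ℂ) (g : Fin d₂ × Fin d₃ → ℂ), ∀ i j k, ψ (i, j, k) = a i * g (j, k)

def BiprodB {d₁ d₂ d₃ : ℕ} (ψ : TriH d₁ d₂ d₃) : Prop :=
  ∃ (b : Fin d₂ → ℂ) (g : Fin d₁ × Fin d₃ → ℂ), ∀ i j k, ψ (i, j, k) = b j * g (i, k)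

def BiprodC {d₁ d₂ d₃ : ℕ} (ψ : TriH d₁ d₂ d₃) : Prop :=
  ∃ (c : Fin d₃ → ℂ) (g : Fin d₁ × Fin d₂ → ℂ), ∀ i j k, ψ (i, j, k) = c k * g (i, j)

def IsGME3 {d₁ d₂ d₃ : ℕ} (ψ : TriH d₁ d₂ d₃) : Prop :=
  ψ ≠ 0 ∧ ¬ BiprodA ψ ∧ ¬ BiprodB ψ ∧ ¬ BiprodC ψ

def IsGES3 {d₁ d₂ d₃ : ℕ} (V : Submodule ℂ (TriH d₁ d₂ d₃)) : Prop :=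
  ∀ ψ ∈ V, ψ ≠ 0 → IsGME3 ψ

def idx4 (j k : Fin 2) : Fin 4 := ⟨2 * j.1 + k.1, by have := j.2; have := k.2; omega⟩

def curveA (A : Matrix (Fin 4) (Fin 4) ℂ) (α : ℂ) : TriH 2 2 2 :=
  WithLp.toLp 2 (fun p : Fin 2 × Fin 2 × Fin 2 =>
    ![(1 : ℂ), α] p.1 * A.mulVec ![1, α, α ^ 2, α ^ 3] (idx4 p.2.1 p.2.2))

lemma zero3 (ψ : TriH 2 2 2) (h000 : ψ (0,0,0) = 0) (h001 : ψ (0,0,1) = 0)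
    (h010 : ψ (0,1,0) = 0) (h011 : ψ (0,1,1) = 0) (h100 : ψ (1,0,0) = 0)
    (h101 : ψ (1,0,1) = 0) (h110 : ψ (1,1,0) = 0) (h111 : ψ (1,1,1) = 0) : ψ = 0 := by
  ext ⟨i, j, k⟩
  fin_cases i <;> fin_cases j <;> fin_cases k <;> simp <;> assumption

lemma key (X A B C D : ℂ) (hX : X ≠ 0) (hdet : A * D - B * C ≠ 0) :
    (∀ ψ : TriH 2 2 2,
      (ψ (0,0,0) = 0 ∧
       A * ψ (0,0,1) + C * ψ (0,1,0) + X * ψ (1,0,0) = 0 ∧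
       B * ψ (0,0,1) + D * ψ (0,1,0) + A * ψ (1,0,1) + C * ψ (1,1,0) = 0 ∧
       ψ (0,1,1) + B * ψ (1,0,1) + D * ψ (1,1,0) = 0 ∧
       ψ (1,1,1) = 0) → ψ ≠ 0 → IsGME3 ψ)
    ↔ (A ≠ 0 ∧ B ≠ 0 ∧ C ≠ 0 ∧ D ≠ 0 ∧ A * D - X ≠ 0 ∧ B * C - X ≠ 0) := by
  constructor
  · intro hG
    -- A ≠ 0
    have hA : A ≠ 0 := by
      intro hA
      have hg := hG (WithLp.toLp 2 (fun p : Fin 2 × Fin 2 × Fin 2 => ![(0:ℂ),1] p.2.2 * ![![(0:ℂ),-B],![(1:ℂ),0]] p.1 p.2.1))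
        (by refine ⟨by simp, by simp, by simp [hA], by simp, by simp⟩)
        (by intro h; have := congrArg (fun v : TriH 2 2 2 => v (1,0,1)) h; simp at this)
      exact hg.2.2.2 ⟨![0,1], fun q => ![![(0:ℂ),-B],![(1:ℂ),0]] q.1 q.2, fun i j k => rfl⟩
    have hB : B ≠ 0 := by
      intro hB
      have hg := hG (WithLp.toLp 2 (fun p : Fin 2 × Fin 2 × Fin 2 => ![(1:ℂ),0] p.2.1 * ![![(0:ℂ),1],![-A/X,0]] p.1 p.2.2))
        (by refine ⟨by simp, by simp; field_simp; ring, by simp [hB], by simp, by simp⟩)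
        (by intro h; have := congrArg (fun v : TriH 2 2 2 => v (0,0,1)) h; simp at this)
      exact hg.2.2.1 ⟨![1,0], fun q => ![![(0:ℂ),1],![-A/X,0]] q.1 q.2, fun i j k => rfl⟩
    have hC : C ≠ 0 := by
      intro hC
      have hg := hG (WithLp.toLp 2 (fun p : Fin 2 × Fin 2 × Fin 2 => ![(0:ℂ),1] p.2.1 * ![![(0:ℂ),-D],![(1:ℂ),0]] p.1 p.2.2))
        (by refine ⟨by simp, by simp, by simp [hC], by simp, by simp⟩)
        (by intro h; have := congrArg (fun v : TriH 2 2 2 => v (1,1,0)) h; simp at this)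
      exact hg.2.2.1 ⟨![0,1], fun q => ![![(0:ℂ),-D],![(1:ℂ),0]] q.1 q.2, fun i j k => rfl⟩
    have hD : D ≠ 0 := by
      intro hD
      have hg := hG (WithLp.toLp 2 (fun p : Fin 2 × Fin 2 × Fin 2 => ![(1:ℂ),0] p.2.2 * ![![(0:ℂ),1],![-C/X,0]] p.1 p.2.1))
        (by refine ⟨by simp, by simp; field_simp; ring, by simp [hD], by simp, by simp⟩)
        (by intro h; have := congrArg (fun v : TriH 2 2 2 => v (0,1,0)) h; simp at this)
      exact hg.2.2.2 ⟨![1,0], fun q => ![![(0:ℂ),1],![-C/X,0]] q.1 q.2, fun i j k => rfl⟩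
    have hADX : A * D - X ≠ 0 := by
      intro hE
      have hADX' : A * D = X := by linear_combination hE
      have hg := hG (WithLp.toLp 2 (fun p : Fin 2 × Fin 2 × Fin 2 => ![(1:ℂ), D*B/C] p.2.1 * ![![(0:ℂ),1],![-A/X,0]] p.1 p.2.2))
        (by
          refine ⟨by simp, by simp; field_simp; ring, ?_, ?_, by simp⟩
          · simp; field_simp; linear_combination -B * hADX'
          · simp; field_simp; linear_combination -D * B * hADX')
        (by intro h; have := congrArg (fun v : TriH 2 2 2 => v (0,0,1)) h; simp at this)
      exact hg.2.2.1 ⟨![1, D*B/C], fun q => ![![(0:ℂ),1],![-A/X,0]] q.1 q.2, fun i j k => rfl⟩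
    have hBCX : B * C - X ≠ 0 := by
      intro hE
      have hBCX' : B * C = X := by linear_combination hE
      have hg := hG (WithLp.toLp 2 (fun p : Fin 2 × Fin 2 × Fin 2 => ![(1:ℂ), B*D/A] p.2.2 * ![![(0:ℂ),1],![-C/X,0]] p.1 p.2.1))
        (by
          refine ⟨by simp, by simp; field_simp; ring, ?_, ?_, by simp⟩
          · simp; field_simp; linear_combination -D * hBCX'
          · simp; field_simp; linear_combination -B * D * hBCX')
        (by intro h; have := congrArg (fun v : TriH 2 2 2 => v (0,1,0)) h; simp at this)
      exact hg.2.2.2 ⟨![1, B*D/A], fun q => ![![(0:ℂ),1],![-C/X,0]] q.1 q.2, fun i j k => rfl⟩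
    exact ⟨hA, hB, hC, hD, hADX, hBCX⟩
  · rintro ⟨hA, hB, hC, hD, hADX, hBCX⟩ ψ ⟨E0, E1, E2, E3, E4⟩ hψ
    refine ⟨hψ, ?_, ?_, ?_⟩
    · rintro ⟨a, g, hfg⟩
      simp only [hfg] at E0 E1 E2 E3 E4
      by_cases ha0 : a 0 = 0
      · have z100 : X * ψ (1,0,0) = 0 := by
          rw [hfg]; linear_combination E1 - (A * g (0,1) + C * g (1,0)) * ha0
        have h2' : A * (a 1 * g (0,1)) + C * (a 1 * g (1,0)) = 0 := by
          linear_combination E2 - (B * g (0,1) + D * g (1,0)) * ha0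
        have h3' : B * (a 1 * g (0,1)) + D * (a 1 * g (1,0)) = 0 := by
          linear_combination E3 - g (1,1) * ha0
        have z101 : (A*D - B*C) * (a 1 * g (0,1)) = 0 := by linear_combination D * h2' - C * h3'
        have z110 : (A*D - B*C) * (a 1 * g (1,0)) = 0 := by linear_combination A * h3' - B * h2'
        refine hψ (zero3 ψ (by rw [hfg]; exact E0) (by rw [hfg, ha0]; ring)
          (by rw [hfg, ha0]; ring) (by rw [hfg, ha0]; ring)
          ((mul_eq_zero.mp z100).resolve_left hX)
          (by rw [hfg]; exact (mul_eq_zero.mp z101).resolve_left hdet)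
          (by rw [hfg]; exact (mul_eq_zero.mp z110).resolve_left hdet)
          (by rw [hfg]; exact E4))
      · have hg00 : g (0,0) = 0 := (mul_eq_zero.mp E0).resolve_left ha0
        by_cases ha1 : a 1 = 0
        · have z011 : ψ (0,1,1) = 0 := by
            rw [hfg]; linear_combination E3 - (B * g (0,1) + D * g (1,0)) * ha1
          have h1' : A * (a 0 * g (0,1)) + C * (a 0 * g (1,0)) = 0 := by
            linear_combination E1 - X * g (0,0) * ha1
          have h2' : B * (a 0 * g (0,1)) + D * (a 0 * g (1,0)) = 0 := by
            linear_combination E2 - (A * g (0,1) + C * g (1,0)) * ha1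
          have z001 : (A*D - B*C) * (a 0 * g (0,1)) = 0 := by linear_combination D * h1' - C * h2'
          have z010 : (A*D - B*C) * (a 0 * g (1,0)) = 0 := by linear_combination A * h2' - B * h1'
          refine hψ (zero3 ψ (by rw [hfg]; exact E0)
            (by rw [hfg]; exact (mul_eq_zero.mp z001).resolve_left hdet)
            (by rw [hfg]; exact (mul_eq_zero.mp z010).resolve_left hdet)
            z011 (by rw [hfg, ha1]; ring) (by rw [hfg, ha1]; ring)
            (by rw [hfg, ha1]; ring) (by rw [hfg]; exact E4))
        · have hg11 : g (1,1) = 0 := (mul_eq_zero.mp E4).resolve_left ha1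
          have h1' : a 0 * (A * g (0,1) + C * g (1,0)) = 0 := by
            linear_combination E1 - X * a 1 * hg00
          have h3' : a 1 * (B * g (0,1) + D * g (1,0)) = 0 := by
            linear_combination E3 - a 0 * hg11
          have q1 := (mul_eq_zero.mp h1').resolve_left ha0
          have q3 := (mul_eq_zero.mp h3').resolve_left ha1
          have hg01 : g (0,1) = 0 := by
            have : (A*D - B*C) * g (0,1) = 0 := by linear_combination D * q1 - C * q3
            exact (mul_eq_zero.mp this).resolve_left hdet
          have hg10 : g (1,0) = 0 := by
            have : (A*D - B*C) * g (1,0) = 0 := by linear_combination A * q3 - B * q1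
            exact (mul_eq_zero.mp this).resolve_left hdet
          exact hψ (zero3 ψ (by rw [hfg, hg00]; ring) (by rw [hfg, hg01]; ring)
            (by rw [hfg, hg10]; ring) (by rw [hfg, hg11]; ring) (by rw [hfg, hg00]; ring)
            (by rw [hfg, hg01]; ring) (by rw [hfg, hg10]; ring) (by rw [hfg, hg11]; ring))
    · rintro ⟨b, h, hfg⟩
      simp only [hfg] at E0 E1 E2 E3 E4
      by_cases hb0 : b 0 = 0
      · have z010 : b 1 * h (0,0) = 0 := by
          have : C * (b 1 * h (0,0)) = 0 := by
            linear_combination E1 - (A * h (0,1) + X * h (1,0)) * hb0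
          exact (mul_eq_zero.mp this).resolve_left hC
        have z110 : b 1 * h (1,0) = 0 := by
          have : C * (b 1 * h (1,0)) = 0 := by
            linear_combination E2 - (B * h (0,1) + A * h (1,1)) * hb0 - D * z010
          exact (mul_eq_zero.mp this).resolve_left hC
        have z011 : b 1 * h (0,1) = 0 := by
          linear_combination E3 - B * h (1,1) * hb0 - D * z110
        exact hψ (zero3 ψ (by rw [hfg, hb0]; ring) (by rw [hfg, hb0]; ring)
          (by rw [hfg]; exact z010) (by rw [hfg]; exact z011) (by rw [hfg, hb0]; ring)
          (by rw [hfg, hb0]; ring) (by rw [hfg]; exact z110) (by rw [hfg]; exact E4))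
      · by_cases hb1 : b 1 = 0
        · have z101 : b 0 * h (1,1) = 0 := by
            have : B * (b 0 * h (1,1)) = 0 := by
              linear_combination E3 - (h (0,1) + D * h (1,0)) * hb1
            exact (mul_eq_zero.mp this).resolve_left hB
          have z001 : b 0 * h (0,1) = 0 := by
            have : B * (b 0 * h (0,1)) = 0 := by
              linear_combination E2 - (D * h (0,0) + C * h (1,0)) * hb1 - A * z101
            exact (mul_eq_zero.mp this).resolve_left hB
          have z100 : b 0 * h (1,0) = 0 := by
            have : X * (b 0 * h (1,0)) = 0 := by
              linear_combination E1 - A * z001 - C * h (0,0) * hb1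
            exact (mul_eq_zero.mp this).resolve_left hX
          exact hψ (zero3 ψ (by rw [hfg]; exact E0) (by rw [hfg]; exact z001)
            (by rw [hfg, hb1]; ring) (by rw [hfg, hb1]; ring) (by rw [hfg]; exact z100)
            (by rw [hfg]; exact z101) (by rw [hfg, hb1]; ring) (by rw [hfg, hb1]; ring))
        · have hh00 : h (0,0) = 0 := (mul_eq_zero.mp E0).resolve_left hb0
          have hh11 : h (1,1) = 0 := (mul_eq_zero.mp E4).resolve_left hb1
          have q1 : A * h (0,1) + X * h (1,0) = 0 := by
            have : b 0 * (A * h (0,1) + X * h (1,0)) = 0 := by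
              linear_combination E1 - C * b 1 * hh00
            exact (mul_eq_zero.mp this).resolve_left hb0
          have q3 : h (0,1) + D * h (1,0) = 0 := by
            have : b 1 * (h (0,1) + D * h (1,0)) = 0 := by
              linear_combination E3 - B * b 0 * hh11
            exact (mul_eq_zero.mp this).resolve_left hb1
          have hh10 : h (1,0) = 0 := by
            have : (A * D - X) * h (1,0) = 0 := by linear_combination A * q3 - q1
            exact (mul_eq_zero.mp this).resolve_left hADX
          have hh01 : h (0,1) = 0 := by linear_combination q3 - D * hh10
          exact hψ (zero3 ψ (by rw [hfg, hh00]; ring) (by rw [hfg, hh01]; ring)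
            (by rw [hfg, hh00]; ring) (by rw [hfg, hh01]; ring) (by rw [hfg, hh10]; ring)
            (by rw [hfg, hh11]; ring) (by rw [hfg, hh10]; ring) (by rw [hfg, hh11]; ring))
    · rintro ⟨c, q, hfg⟩
      simp only [hfg] at E0 E1 E2 E3 E4
      by_cases hc0 : c 0 = 0
      · have z001 : c 1 * q (0,0) = 0 := by
          have : A * (c 1 * q (0,0)) = 0 := by
            linear_combination E1 - (C * q (0,1) + X * q (1,0)) * hc0
          exact (mul_eq_zero.mp this).resolve_left hA
        have z101 : c 1 * q (1,0) = 0 := by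
          have : A * (c 1 * q (1,0)) = 0 := by
            linear_combination E2 - (D * q (0,1) + C * q (1,1)) * hc0 - B * z001
          exact (mul_eq_zero.mp this).resolve_left hA
        have z011 : c 1 * q (0,1) = 0 := by
          linear_combination E3 - D * q (1,1) * hc0 - B * z101
        exact hψ (zero3 ψ (by rw [hfg, hc0]; ring) (by rw [hfg]; exact z001)
          (by rw [hfg, hc0]; ring) (by rw [hfg]; exact z011) (by rw [hfg, hc0]; ring)
          (by rw [hfg]; exact z101) (by rw [hfg, hc0]; ring) (by rw [hfg]; exact E4))
      · by_cases hc1 : c 1 = 0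
        · have z110 : c 0 * q (1,1) = 0 := by
            have : D * (c 0 * q (1,1)) = 0 := by
              linear_combination E3 - (q (0,1) + B * q (1,0)) * hc1
            exact (mul_eq_zero.mp this).resolve_left hD
          have z010 : c 0 * q (0,1) = 0 := by
            have : D * (c 0 * q (0,1)) = 0 := by
              linear_combination E2 - (B * q (0,0) + A * q (1,0)) * hc1 - C * z110
            exact (mul_eq_zero.mp this).resolve_left hD
          have z100 : c 0 * q (1,0) = 0 := by
            have : X * (c 0 * q (1,0)) = 0 := by
              linear_combination E1 - A * q (0,0) * hc1 - C * z010
            exact (mul_eq_zero.mp this).resolve_left hX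
          exact hψ (zero3 ψ (by rw [hfg]; exact E0) (by rw [hfg, hc1]; ring)
            (by rw [hfg]; exact z010) (by rw [hfg, hc1]; ring) (by rw [hfg]; exact z100)
            (by rw [hfg, hc1]; ring) (by rw [hfg]; exact z110) (by rw [hfg, hc1]; ring))
        · have hq00 : q (0,0) = 0 := (mul_eq_zero.mp E0).resolve_left hc0
          have hq11 : q (1,1) = 0 := (mul_eq_zero.mp E4).resolve_left hc1
          have r1 : C * q (0,1) + X * q (1,0) = 0 := by
            have : c 0 * (C * q (0,1) + X * q (1,0)) = 0 := by
              linear_combination E1 - A * c 1 * hq00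
            exact (mul_eq_zero.mp this).resolve_left hc0
          have r3 : q (0,1) + B * q (1,0) = 0 := by
            have : c 1 * (q (0,1) + B * q (1,0)) = 0 := by
              linear_combination E3 - D * c 0 * hq11
            exact (mul_eq_zero.mp this).resolve_left hc1
          have hq10 : q (1,0) = 0 := by
            have : (B * C - X) * q (1,0) = 0 := by linear_combination C * r3 - r1
            exact (mul_eq_zero.mp this).resolve_left hBCX
          have hq01 : q (0,1) = 0 := by linear_combination r3 - B * hq10
          exact hψ (zero3 ψ (by rw [hfg, hq00]; ring) (by rw [hfg, hq00]; ring)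
            (by rw [hfg, hq01]; ring) (by rw [hfg, hq01]; ring) (by rw [hfg, hq10]; ring)
            (by rw [hfg, hq10]; ring) (by rw [hfg, hq11]; ring) (by rw [hfg, hq11]; ring))

open ComplexConjugate

lemma mem_orth_iff (f : ℂ → TriH 2 2 2) (ψ : TriH 2 2 2) :
    ψ ∈ (Submodule.span ℂ (Set.range f))ᗮ ↔ ∀ α, inner ℂ (f α) ψ = 0 := by
  rw [Submodule.mem_orthogonal]
  constructor
  · intro h α; exact h _ (Submodule.subset_span ⟨α, rfl⟩)
  · intro h u hu
    induction hu using Submodule.span_induction with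
    | mem u hu => obtain ⟨α, rfl⟩ := hu; exact h α
    | zero => simp
    | add u v _ _ hu hv => rw [inner_add_left, hu, hv]; ring
    | smul c u _ hu => rw [inner_smul_left, hu]; ring

lemma inner_curve (x a₁₁ a₁₂ a₂₁ a₂₂ α : ℂ) (ψ : TriH 2 2 2) :
    inner ℂ (curveA !![x,0,0,0;0,a₁₁,a₁₂,0;0,a₂₁,a₂₂,0;0,0,0,1] α) ψ =
    conj x * ψ (0,0,0)
    + conj α * (conj a₁₁ * ψ (0,0,1) + conj a₂₁ * ψ (0,1,0) + conj x * ψ (1,0,0))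
    + conj α^2 * (conj a₁₂ * ψ (0,0,1) + conj a₂₂ * ψ (0,1,0) + conj a₁₁ * ψ (1,0,1)
        + conj a₂₁ * ψ (1,1,0))
    + conj α^3 * (ψ (0,1,1) + conj a₁₂ * ψ (1,0,1) + conj a₂₂ * ψ (1,1,0))
    + conj α^4 * ψ (1,1,1) := by
  simp [PiLp.inner_apply, RCLike.inner_apply, Fintype.sum_prod_type, Fin.sum_univ_two,
    curveA, idx4, Matrix.mulVec, dotProduct, Fin.sum_univ_four, Fin.isValue,
    Matrix.cons_val_zero, Matrix.cons_val_one, Matrix.head_cons, Matrix.vecHead,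
    Matrix.vecTail, Function.comp, map_add, map_mul, map_pow]
  ring

lemma vand (e0 e1 e2 e3 e4 : ℂ)
    (H : ∀ α : ℂ, e0 + conj α * e1 + conj α^2 * e2 + conj α^3 * e3 + conj α^4 * e4 = 0) :
    e0 = 0 ∧ e1 = 0 ∧ e2 = 0 ∧ e3 = 0 ∧ e4 = 0 := by
  have h0 := H 0; have h1 := H 1; have h2 := H 2; have h3 := H 3; have h4 := H 4
  simp only [map_zero, map_one, map_ofNat] at h0 h1 h2 h3 h4
  refine ⟨by linear_combination h0,
    by linear_combination (-25/12 : ℂ)*h0 + 4*h1 - 3*h2 + (4/3 : ℂ)*h3 - (1/4 : ℂ)*h4,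
    by linear_combination (35/24 : ℂ)*h0 - (13/3 : ℂ)*h1 + (19/4 : ℂ)*h2 - (7/3 : ℂ)*h3 + (11/24 : ℂ)*h4,
    by linear_combination (-5/12 : ℂ)*h0 + (3/2 : ℂ)*h1 - 2*h2 + (7/6 : ℂ)*h3 - (1/4 : ℂ)*h4,
    by linear_combination (1/24 : ℂ)*h0 - (1/6 : ℂ)*h1 + (1/4 : ℂ)*h2 - (1/6 : ℂ)*h3 + (1/24 : ℂ)*h4⟩

/-- for the block matrix `𝒜(x)` with rows `(x,0,0,0)`, `(0,a₁₁,a₁₂,0)`,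
`(0,a₂₁,a₂₂,0)`, `(0,0,0,1)` (with `x ≠ 0` and `a₁₁a₂₂ − a₁₂a₂₁ ≠ 0`), the subspace
`(span{(1,α) ⊗ 𝒜(x)(1,α,α²,α³)})^⊥` is a GES of `ℂ²⊗ℂ²⊗ℂ²` iff all `aᵢⱼ ≠ 0`,
`a₁₁a₂₂ − x ≠ 0` and `a₁₂a₂₁ − x ≠ 0`. -/
theorem solved_class (x a₁₁ a₁₂ a₂₁ a₂₂ : ℂ) (hx : x ≠ 0)
    (hdet : a₁₁ * a₂₂ - a₁₂ * a₂₁ ≠ 0) :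
    IsGES3 ((Submodule.span ℂ (Set.range (curveA
        !![x, 0, 0, 0; 0, a₁₁, a₁₂, 0; 0, a₂₁, a₂₂, 0; 0, 0, 0, 1])))ᗮ) ↔
      (a₁₁ ≠ 0 ∧ a₁₂ ≠ 0 ∧ a₂₁ ≠ 0 ∧ a₂₂ ≠ 0 ∧
        a₁₁ * a₂₂ - x ≠ 0 ∧ a₁₂ * a₂₁ - x ≠ 0) := by
  have cne : ∀ z : ℂ, conj z ≠ 0 ↔ z ≠ 0 := fun z => by
    constructor
    · intro h hz; exact h (by rw [hz, map_zero])
    · intro h hz; exact h ((starRingEnd ℂ).injective (by rw [hz, map_zero]))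
  have hX : conj x ≠ 0 := (cne x).mpr hx
  have hdet' : conj a₁₁ * conj a₂₂ - conj a₁₂ * conj a₂₁ ≠ 0 := by
    rw [← map_mul, ← map_mul, ← map_sub]; exact (cne _).mpr hdet
  have hmem : ∀ ψ : TriH 2 2 2,
      ψ ∈ (Submodule.span ℂ (Set.range (curveA
        !![x, 0, 0, 0; 0, a₁₁, a₁₂, 0; 0, a₂₁, a₂₂, 0; 0, 0, 0, 1])))ᗮ ↔
      (ψ (0,0,0) = 0 ∧
       conj a₁₁ * ψ (0,0,1) + conj a₂₁ * ψ (0,1,0) + conj x * ψ (1,0,0) = 0 ∧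
       conj a₁₂ * ψ (0,0,1) + conj a₂₂ * ψ (0,1,0) + conj a₁₁ * ψ (1,0,1)
         + conj a₂₁ * ψ (1,1,0) = 0 ∧
       ψ (0,1,1) + conj a₁₂ * ψ (1,0,1) + conj a₂₂ * ψ (1,1,0) = 0 ∧
       ψ (1,1,1) = 0) := by
    intro ψ
    rw [mem_orth_iff]
    constructor
    · intro h
      obtain ⟨e0z, e1z, e2z, e3z, e4z⟩ := vand _ _ _ _ _
        (fun α => by rw [← inner_curve]; exact h α)
      exact ⟨(mul_eq_zero.mp e0z).resolve_left hX, e1z, e2z, e3z, e4z⟩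
    · rintro ⟨h0, h1, h2, h3, h4⟩ α
      rw [inner_curve]
      linear_combination conj x * h0 + conj α * h1 + conj α^2 * h2 + conj α^3 * h3
        + conj α^4 * h4
  have main : IsGES3 ((Submodule.span ℂ (Set.range (curveA
        !![x, 0, 0, 0; 0, a₁₁, a₁₂, 0; 0, a₂₁, a₂₂, 0; 0, 0, 0, 1])))ᗮ) ↔
      (∀ ψ : TriH 2 2 2,
        (ψ (0,0,0) = 0 ∧
         conj a₁₁ * ψ (0,0,1) + conj a₂₁ * ψ (0,1,0) + conj x * ψ (1,0,0) = 0 ∧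
         conj a₁₂ * ψ (0,0,1) + conj a₂₂ * ψ (0,1,0) + conj a₁₁ * ψ (1,0,1)
           + conj a₂₁ * ψ (1,1,0) = 0 ∧
         ψ (0,1,1) + conj a₁₂ * ψ (1,0,1) + conj a₂₂ * ψ (1,1,0) = 0 ∧
         ψ (1,1,1) = 0) → ψ ≠ 0 → IsGME3 ψ) := by
    constructor
    · intro h ψ he hne; exact h ψ ((hmem ψ).mpr he) hne
    · intro h ψ hm hne; exact h ψ ((hmem ψ).mp hm) hne
  rw [main, key (conj x) (conj a₁₁) (conj a₁₂) (conj a₂₁) (conj a₂₂) hX hdet']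
  have hmx : ∀ u v : ℂ, (conj u * conj v - conj x ≠ 0) ↔ (u * v - x ≠ 0) := fun u v => by
    rw [← map_mul, ← map_sub]; exact cne _
  rw [cne, cne, cne, cne, hmx, hmx]
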